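/- Let $\widehat{R}_0$ be a complete discrete valuation ring with uniformizer $t$, fraction field $F_0$ with the $t$-adic absolute value. Let $V \subseteq \widehat{R}_0$ be a $t$-adically complete submodule with $V \cap t\widehat{R}_0 = tV$. Then $V[1/t]$ is closed in $F_0$; in particular, if $F_0$ is complete, $V[1/t]$ is a complete normed space over the subfield $K$ of $F_0$. -/

import Mathlib

private lemma auxA {T R : Type} [CommRing T] [CommRing R] [Algebra T R] [IsDomain R]
    (t0 : T) (ht0 : algebraMap T R t0 ≠ 0) (V : Submodule T R)
    (hV : ∀ x : R, (x ∈ V ∧ x ∈ Ideal.span {algebraMap T R t0}) ↔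
      ∃ a ∈ V, x = algebraMap T R t0 * a) :
    ∀ (m : ℕ) (x : R), x ∈ V → (algebraMap T R t0) ^ m ∣ x →
      ∃ a ∈ V, x = (algebraMap T R t0) ^ m * a := by
  intro m
  induction m with
  | zero => exact fun x hx _ => ⟨x, hx, by simp⟩
  | succ m ih =>
    rintro x hx ⟨w, hw⟩
    have hdvd : x ∈ Ideal.span {algebraMap T R t0} :=
      Ideal.mem_span_singleton.mpr ⟨algebraMap T R t0 ^ m * w, by rw [hw]; ring⟩
    obtain ⟨a, ha, hxa⟩ := (hV x).mp ⟨hx, hdvd⟩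
    have haw : a = algebraMap T R t0 ^ m * w := by
      apply mul_left_cancel₀ ht0
      rw [← hxa, hw]; ring
    obtain ⟨b, hb, hab⟩ := ih a ha ⟨w, haw⟩
    exact ⟨b, hb, by rw [hxa, hab]; ring⟩

/- STATEMENT 3: `V[1/t]` is closed in `F₀` (w.r.t. the `t`-adic absolute value); in
particular, if `F₀` is complete then `V[1/t]` is complete (a Banach space over the
subfield `K = Frac T`). -/
theorem stmt_3 (T R : Type) [CommRing T] [CommRing R] [Algebra T R]
    [IsDomain R] [IsDiscreteValuationRing R]
    (t0 : T) (ht : Irreducible (algebraMap T R t0))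
    [IsAdicComplete (Ideal.span {algebraMap T R t0}) R]
    (F0 : Type) [Field F0] [Algebra R F0] [IsFractionRing R F0]
    (tF : F0) (htF : tF = algebraMap R F0 (algebraMap T R t0))
    (α : ℝ) (hα : 1 < α) (v : AbsoluteValue F0 ℝ)
    (hv : ∀ (n : ℤ) (u : Rˣ), v (tF ^ n * algebraMap R F0 (u : R)) = α ^ (-n))
    (V : Submodule T R)
    [IsAdicComplete (Ideal.span {t0} : Ideal T) V]
    (hV : ∀ x : R, (x ∈ V ∧ x ∈ Ideal.span {algebraMap T R t0}) ↔
      ∃ a ∈ V, x = algebraMap T R t0 * a) :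
    -- V[1/t] is closed in F₀:
    (∀ x : F0,
      (∀ ε : ℝ, 0 < ε → ∃ y : F0,
        (∃ (m : ℕ) (a : R), a ∈ V ∧ y * tF ^ m = algebraMap R F0 a) ∧ v (x - y) < ε) →
      (∃ (m : ℕ) (a : R), a ∈ V ∧ x * tF ^ m = algebraMap R F0 a)) ∧
    -- if F₀ is complete, V[1/t] is complete:
    ((∀ u : ℕ → F0,
        (∀ ε : ℝ, 0 < ε → ∃ N, ∀ p ≥ N, ∀ q ≥ N, v (u p - u q) < ε) →
        ∃ l : F0, ∀ ε : ℝ, 0 < ε → ∃ N, ∀ p ≥ N, v (u p - l) < ε) →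
      ∀ u : ℕ → F0,
        (∀ p : ℕ, ∃ (m : ℕ) (a : R), a ∈ V ∧ u p * tF ^ m = algebraMap R F0 a) →
        (∀ ε : ℝ, 0 < ε → ∃ N, ∀ p ≥ N, ∀ q ≥ N, v (u p - u q) < ε) →
        ∃ l : F0, (∃ (m : ℕ) (a : R), a ∈ V ∧ l * tF ^ m = algebraMap R F0 a) ∧
          ∀ ε : ℝ, 0 < ε → ∃ N, ∀ p ≥ N, v (u p - l) < ε) := by
  have hinj : Function.Injective (algebraMap R F0) := IsFractionRing.injective R F0
  have ht0 : algebraMap T R t0 ≠ 0 := ht.ne_zero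
  have hα0 : (0:ℝ) < α := lt_trans one_pos hα
  have hεpos : ∀ k : ℤ, (0:ℝ) < α ^ k := fun k => zpow_pos hα0 k
  -- v (tF ^ m) = α ^ (-m)
  have hvm : ∀ m : ℕ, v (tF ^ m) = α ^ (-(m:ℤ)) := by
    intro m
    have h2 := hv (m : ℤ) 1
    rw [zpow_natCast] at h2
    simpa using h2
  -- key : small absolute value forces divisibility
  have hkey : ∀ (r : R) (k : ℕ), v (algebraMap R F0 r) < α ^ (-(k:ℤ)) →
      (algebraMap T R t0) ^ k ∣ r := by
    intro r k hr
    by_cases hr0 : r = 0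
    · exact hr0 ▸ dvd_zero _
    obtain ⟨n, u, hru⟩ := IsDiscreteValuationRing.eq_unit_mul_pow_irreducible hr0 ht
    have hval : v (algebraMap R F0 r) = α ^ (-(n:ℤ)) := by
      have h2 := hv (n : ℤ) u
      rw [zpow_natCast] at h2
      rw [hru, map_mul, map_pow, ← htF, mul_comm]
      exact h2
    have hkn : k ≤ n := by
      have h3 := (zpow_lt_zpow_iff_right₀ hα).mp (hval ▸ hr)
      omega
    exact dvd_trans (pow_dvd_pow _ hkn) ⟨↑u, by rw [hru]; ring⟩
  -- Part 1 : closedness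
  have part1 : ∀ x : F0,
      (∀ ε : ℝ, 0 < ε → ∃ y : F0,
        (∃ (m : ℕ) (a : R), a ∈ V ∧ y * tF ^ m = algebraMap R F0 a) ∧ v (x - y) < ε) →
      (∃ (m : ℕ) (a : R), a ∈ V ∧ x * tF ^ m = algebraMap R F0 a) := by
    intro x H
    -- write x * tF^m0 = algebraMap r
    obtain ⟨⟨a0, b0⟩, hab0⟩ := IsLocalization.surj (nonZeroDivisors R) x
    have hb0 : (b0 : R) ≠ 0 := nonZeroDivisors.coe_ne_zero b0
    obtain ⟨m0, u0, hb0u⟩ := IsDiscreteValuationRing.eq_unit_mul_pow_irreducible hb0 ht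
    set r : R := (↑u0⁻¹ : R) * a0 with hrdef
    have hu0 : algebraMap R F0 (↑u0 : R) ≠ 0 := fun h =>
      Units.ne_zero u0 (hinj (by rw [h, map_zero]))
    have hxr : x * tF ^ m0 = algebraMap R F0 r := by
      apply mul_right_cancel₀ hu0
      calc x * tF ^ m0 * algebraMap R F0 (↑u0 : R)
          = x * algebraMap R F0 ((↑u0 : R) * algebraMap T R t0 ^ m0) := by
            rw [map_mul, map_pow, ← htF]; ring
        _ = x * algebraMap R F0 (b0 : R) := by rw [← hb0u]
        _ = algebraMap R F0 a0 := hab0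
        _ = algebraMap R F0 r * algebraMap R F0 (↑u0 : R) := by
            rw [← map_mul]
            congr 1
            rw [hrdef, mul_comm, ← mul_assoc, Units.mul_inv, one_mul]
    -- approximate r by elements of V modulo t^k
    have happrox : ∀ k : ℕ, ∃ b ∈ V, (algebraMap T R t0) ^ k ∣ (r - b) := by
      intro k
      obtain ⟨y, ⟨m', a', ha', hy⟩, hxy⟩ := H (α ^ (-(k:ℤ))) (hεpos _)
      set a'' : R := algebraMap T R t0 ^ m0 * a' with ha''def
      have ha''V : a'' ∈ V := by
        have := V.smul_mem (t0 ^ m0) ha'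
        rwa [Algebra.smul_def, map_pow] at this
      set s : R := r * algebraMap T R t0 ^ m' - a'' with hsdef
      have hseq : algebraMap R F0 s = (x - y) * tF ^ m0 * tF ^ m' := by
        have h1 : algebraMap R F0 a'' = tF ^ m0 * (y * tF ^ m') := by
          rw [ha''def, map_mul, map_pow, ← htF, hy]
        rw [hsdef, map_sub, map_mul, map_pow, ← htF, ← hxr, h1]
        ring
      have hs : v (algebraMap R F0 s) < α ^ (-((k + m' : ℕ) : ℤ)) := by
        have heq : v (algebraMap R F0 s) = v (x - y) * (α ^ (-(m0:ℤ)) * α ^ (-(m':ℤ))) := by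
          rw [hseq, v.map_mul, v.map_mul, hvm m0, hvm m']
          ring
        rw [heq]
        calc v (x - y) * (α ^ (-(m0:ℤ)) * α ^ (-(m':ℤ)))
            < α ^ (-(k:ℤ)) * (α ^ (-(m0:ℤ)) * α ^ (-(m':ℤ))) := by
              apply mul_lt_mul_of_pos_right hxy
              exact mul_pos (hεpos _) (hεpos _)
          _ = α ^ (-(k:ℤ) + (-(m0:ℤ) + -(m':ℤ))) := by
              rw [zpow_add₀ (ne_of_gt hα0), zpow_add₀ (ne_of_gt hα0)]
          _ ≤ α ^ (-((k + m' : ℕ) : ℤ)) := by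
              apply zpow_le_zpow_right₀ hα.le
              push_cast
              omega
      obtain ⟨w, hw⟩ := hkey s _ hs
      rw [pow_add] at hw
      have ha''dvd : (algebraMap T R t0) ^ m' ∣ a'' :=
        ⟨r - algebraMap T R t0 ^ k * w, by linear_combination -hw⟩
      obtain ⟨b, hb, hab⟩ := auxA t0 ht0 V hV m' a'' ha''V ha''dvd
      refine ⟨b, hb, w, ?_⟩
      apply mul_left_cancel₀ (pow_ne_zero m' ht0)
      linear_combination hw + hab
    choose b hbV hbd using happrox
    set f : ℕ → V := fun k => ⟨b k, hbV k⟩ with hf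
    have hcau : ∀ {m n : ℕ}, m ≤ n →
        f m ≡ f n [SMOD ((Ideal.span {t0} : Ideal T) ^ m • ⊤ : Submodule T V)] := by
      intro m n hmn
      rw [SModEq.sub_mem]
      obtain ⟨wm, hwm⟩ := hbd m
      obtain ⟨wn, hwn⟩ := hbd n
      have hdvd : (algebraMap T R t0) ^ m ∣ (b m - b n) := by
        have h5 : b m - b n = (r - b n) - (r - b m) := by ring
        rw [h5, hwn, hwm]
        exact dvd_sub (dvd_mul_of_dvd_left (pow_dvd_pow _ hmn) wn) (dvd_mul_right _ wm)
      obtain ⟨c, hc, hbc⟩ := auxA t0 ht0 V hV m (b m - b n) (V.sub_mem (hbV m) (hbV n)) hdvd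
      have h6 : f m - f n = (t0 ^ m : T) • (⟨c, hc⟩ : V) := by
        apply Subtype.ext
        show b m - b n = (t0 ^ m : T) • c
        rw [Algebra.smul_def, map_pow]
        exact hbc
      rw [h6]
      exact Submodule.smul_mem_smul
        (Ideal.pow_mem_pow (Ideal.mem_span_singleton_self t0) m) trivial
    obtain ⟨L, hL⟩ := IsPrecomplete.prec inferInstance hcau
    have hLn : ∀ n : ℕ, ∃ c : V, b n - (L : R) = algebraMap T R t0 ^ n * (c : R) := by
      intro n
      have h7 := SModEq.sub_mem.mp (hL n)
      rw [Ideal.span_singleton_pow, Submodule.ideal_span_singleton_smul] at h7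
      rw [← SetLike.mem_coe, Submodule.coe_pointwise_smul] at h7
      obtain ⟨z, -, hz⟩ := Set.mem_smul_set.mp h7
      refine ⟨z, ?_⟩
      have h8 := congrArg (Subtype.val : V → R) hz
      rw [Submodule.coe_smul] at h8
      have h9 : ((f n - L : V) : R) = b n - (L : R) := rfl
      rw [h9] at h8
      rw [← h8, Algebra.smul_def, map_pow]
    have hfinal : ∀ n : ℕ, (algebraMap T R t0) ^ n ∣ (r - (L : R)) := by
      intro n
      obtain ⟨c, hc⟩ := hLn n
      obtain ⟨w, hw⟩ := hbd n
      exact ⟨w + c, by rw [mul_add, ← hw, ← hc]; ring⟩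
    have hrL : r = (L : R) := by
      have h10 : r - (L : R) = 0 := by
        apply IsHausdorff.haus (inferInstance :
          IsHausdorff (Ideal.span {algebraMap T R t0}) R)
        intro n
        rw [SModEq.sub_mem, sub_zero]
        obtain ⟨w, hw⟩ := hfinal n
        rw [hw, ← smul_eq_mul]
        exact Submodule.smul_mem_smul
          (Ideal.pow_mem_pow (Ideal.mem_span_singleton_self _) n) trivial
      exact sub_eq_zero.mp h10
    exact ⟨m0, L, L.2, by rw [hxr, hrL]⟩
  refine ⟨part1, ?_⟩
  intro hc u hu hcauchy
  obtain ⟨l, hl⟩ := hc u hcauchy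
  refine ⟨l, ?_, hl⟩
  apply part1
  intro ε hε
  obtain ⟨N, hN⟩ := hl ε hε
  refine ⟨u N, hu N, ?_⟩
  have := hN N le_rfl
  rwa [v.map_sub] at this
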